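/- arXiv:1606.06533 — 3 statements merged into one kernel-verified Lean document; each statement's English description precedes it below -/
import Mathlib

section
/- Subadditivity of the localized minimal energies: let F ∈ ℝ^{n×d} and ω ∈ Ω. If A, A₁, …, A_M are half-open axis-parallel boxes with integer corners (i.e. sets of the form Π_{i=1}^d [a_i,b_i) with a,b ∈ ℤ^d), the A₁,…,A_M are pairwise disjoint, and A = A₁ ∪ … ∪ A_M, then m_F(ω;A) ≤ Σ_{i=1}^M m_F(ω;A_i). -/
open MeasureTheory Filter Metric Set
open scoped Classical
open scoped ENNReal Topology Pointwise

noncomputable section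

namespace StochHom

/-- `ℝ^d` with the Euclidean norm. -/
abbrev Rd (d : ℕ) : Type := EuclideanSpace ℝ (Fin d)

/-- `ℝ^n` with the Euclidean norm. -/
abbrev Rn (n : ℕ) : Type := EuclideanSpace ℝ (Fin n)

/-- The lattice `ℤ^d`. -/
abbrev Zd (d : ℕ) : Type := Fin d → ℤ

variable {d n : ℕ}

/-- The embedding of the lattice `ℤ^d` into `ℝ^d`. -/
def toRd (z : Zd d) : Rd d := (EuclideanSpace.equiv (Fin d) ℝ).symm fun i => (z i : ℝ)

/-- The standard basis vectors `eᵢ` of `ℤ^d`. -/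
def stdb (i : Fin d) : Zd d := fun j => if j = i then 1 else 0

/-- The interaction range `R = max {4√d, max_{b ∈ ℰ₀} |b|}`. -/
def irange (d : ℕ) (E0 : Finset (Zd d)) : ℝ :=
  max (4 * Real.sqrt d) (sSup ((fun b : Zd d => ‖toRd b‖) '' (E0 : Set (Zd d))))

variable {Ω : Type*} [MeasurableSpace Ω]

/-- The energy `E₁(ω; u, ℤ^d ∩ A)`. -/
def energy1 (τ : Zd d → Ω → Ω) (E0 : Finset (Zd d)) (V : Zd d → Ω → Rn n → ℝ)
    (ω : Ω) (u : Zd d → Rn n) (A : Set (Rd d)) : ℝ :=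
  ∑' z : Zd d, if toRd z ∈ A then
      ∑ b ∈ E0, V b (τ z ω) ((‖toRd b‖)⁻¹ • (u (z + b) - u z)) else 0

/-- The scaled energy `E_ε(ω; u, A)`, where a function `u : εℤ^d → ℝ^n` is identified with a
function on `ℤ^d` via `z ↦ u(εz)`, so that `∂_b^ε u (z) = (u (z+b) - u z)/(ε |b|)`. -/
def energyE (τ : Zd d → Ω → Ω) (E0 : Finset (Zd d)) (V : Zd d → Ω → Rn n → ℝ)
    (ε : ℝ) (ω : Ω) (u : Zd d → Rn n) (A : Set (Rd d)) : ℝ :=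
  ε ^ d * ∑' z : Zd d, if ε • toRd z ∈ A then
      ∑ b ∈ E0, V b (τ z ω) ((ε * ‖toRd b‖)⁻¹ • (u (z + b) - u z)) else 0

/-- The localized minimal energy `m_F(ω; A)`. -/
def mF (τ : Zd d → Ω → Ω) (E0 : Finset (Zd d)) (V : Zd d → Ω → Rn n → ℝ)
    (ω : Ω) (F : Rd d →L[ℝ] Rn n) (A : Set (Rd d)) : ℝ :=
  ⨅ φ : {φ : Zd d → Rn n // ∀ z : Zd d, infDist (toRd z) Aᶜ ≤ irange d E0 → φ z = 0},
    energy1 τ E0 V ω (fun z => F (toRd z) + φ.1 z) A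

/-- The half-open cube `[0,k)^d ⊂ ℝ^d`. -/
def cube (d k : ℕ) : Set (Rd d) := {x | ∀ i, 0 ≤ x i ∧ x i < (k : ℝ)}

/-- The homogenized energy density `W₀(F) = inf_{k ≥ 1} k⁻ᵈ E[m_F(·, [0,k)^d)]`. -/
def W0 (P : Measure Ω) (τ : Zd d → Ω → Ω) (E0 : Finset (Zd d))
    (V : Zd d → Ω → Rn n → ℝ) (F : Rd d →L[ℝ] Rn n) : ℝ :=
  ⨅ k : {k : ℕ // 0 < k}, (((k : ℕ) : ℝ) ^ d)⁻¹ * ∫ ω, mF τ E0 V ω F (cube d k) ∂P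

/-- Half-open axis-parallel box `Π_i [aᵢ, bᵢ)`. -/
def halfBox (a b : Fin d → ℝ) : Set (Rd d) := {x | ∀ i, a i ≤ x i ∧ x i < b i}

/-- Open axis-parallel box `Π_i (aᵢ, bᵢ)`. -/
def openBox (a b : Fin d → ℝ) : Set (Rd d) := {x | ∀ i, a i < x i ∧ x i < b i}

/-- Closed axis-parallel box `Π_i [aᵢ, bᵢ]`. -/
def closedBox (a b : Fin d → ℝ) : Set (Rd d) := {x | ∀ i, a i ≤ x i ∧ x i ≤ b i}

/-- Half-open axis-parallel box with integer corners. -/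
def intBox (a b : Zd d) : Set (Rd d) := {x | ∀ i, (a i : ℝ) ≤ x i ∧ x i < (b i : ℝ)}

/-- The periodic cell minimization `W^{(k)}(ω; F)`. -/
def Wper (τ : Zd d → Ω → Ω) (E0 : Finset (Zd d)) (V : Zd d → Ω → Rn n → ℝ)
    (k : ℕ) (ω : Ω) (F : Rd d →L[ℝ] Rn n) : ℝ :=
  ⨅ φ : {φ : Zd d → Rn n // ∀ z z' : Zd d, φ (z + k • z') = φ z},
    ((k : ℝ) ^ d)⁻¹ * energy1 τ E0 V ω (fun z => F (toRd z) + φ.1 z) (cube d k)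

lemma toRd_apply (z : Zd d) (i : Fin d) : toRd z i = (z i : ℝ) := rfl

lemma toRd_add (z w : Zd d) : toRd (z + w) = toRd z + toRd w := by
  ext i
  simp only [toRd_apply, PiLp.add_apply, Pi.add_apply]
  push_cast
  ring

lemma dist_toRd_add (z c : Zd d) : dist (toRd (z + c)) (toRd z) = ‖toRd c‖ := by
  rw [dist_eq_norm, toRd_add, add_sub_cancel_left]

lemma energy1_nonneg (τ : Zd d → Ω → Ω) (E0 : Finset (Zd d)) (V : Zd d → Ω → Rn n → ℝ)
    (hVnn : ∀ b ∈ E0, ∀ (ω : Ω) (r : Rn n), 0 ≤ V b ω r)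
    (ω : Ω) (u : Zd d → Rn n) (A : Set (Rd d)) : 0 ≤ energy1 τ E0 V ω u A := by
  unfold energy1
  refine tsum_nonneg fun z => ?_
  split
  · exact Finset.sum_nonneg fun c hc => hVnn c hc _ _
  · exact le_rfl

set_option maxHeartbeats 1000000 in
/-- subadditivity of the localized minimal energies. -/
theorem subadditivity_mF
    {d n : ℕ} (hd : 2 ≤ d) (hn : 1 ≤ n)
    {Ω : Type*} [MeasurableSpace Ω] (P : Measure Ω) [IsProbabilityMeasure P]
    (τ : Zd d → Ω → Ω) (hτ0 : τ 0 = id)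
    (hτadd : ∀ x y : Zd d, τ (x + y) = τ x ∘ τ y)
    (hτmp : ∀ z : Zd d, MeasurePreserving (τ z) P P)
    (hτerg : ∀ B : Set Ω, MeasurableSet B → (∀ z : Zd d, τ z ⁻¹' B = B) → P B = 0 ∨ P B = 1)
    (E0 : Finset (Zd d)) (hE00 : (0 : Zd d) ∉ E0) (hE0b : ∀ i : Fin d, stdb i ∈ E0)
    (p c₁ : ℝ) (hp : 1 < p) (hc₁ : 0 < c₁)
    (V : Zd d → Ω → Rn n → ℝ)
    (hVmeas : ∀ b ∈ E0, Measurable fun q : Ω × Rn n => V b q.1 q.2)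
    (hVcont : ∀ b ∈ E0, ∀ ω : Ω, Continuous (V b ω))
    (hVnn : ∀ b ∈ E0, ∀ (ω : Ω) (r : Rn n), 0 ≤ V b ω r)
    (lam : Zd d → Ω → ℝ)
    (hlammeas : ∀ b ∈ E0, Measurable (lam b))
    (hlamnn : ∀ b ∈ E0, ∀ ω : Ω, 0 ≤ lam b ω)
    (hgrowth : ∀ b ∈ E0, ∀ (ω : Ω) (r : Rn n),
      lam b ω * (‖r‖ ^ p / c₁ - c₁) ≤ V b ω r ∧ V b ω r ≤ c₁ * (1 + lam b ω * (‖r‖ ^ p + 1)))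
    (F : Rd d →L[ℝ] Rn n) (ω : Ω) (M : ℕ)
    (aA bA : Zd d) (a b : Fin M → Zd d)
    (hdisj : ∀ i j : Fin M, i ≠ j → Disjoint (intBox (a i) (b i)) (intBox (a j) (b j)))
    (hunion : intBox aA bA = ⋃ i : Fin M, intBox (a i) (b i)) :
    mF τ E0 V ω F (intBox aA bA) ≤ ∑ i : Fin M, mF τ E0 V ω F (intBox (a i) (b i)) := by
  classical
  set Ai : Fin M → Set (Rd d) := fun i => intBox (a i) (b i) with hAidef
  have hR0 : (0:ℝ) ≤ irange d E0 := by
    refine le_trans ?_ (le_max_left _ _)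
    positivity
  have hRb : ∀ c ∈ E0, ‖toRd c‖ ≤ irange d E0 := by
    intro c hc
    have hmem : ‖toRd c‖ ∈ (fun b : Zd d => ‖toRd b‖) '' (E0 : Set (Zd d)) := ⟨c, hc, rfl⟩
    exact le_trans (le_csSup (((E0 : Set (Zd d)).toFinite.image _).bddAbove) hmem)
      (le_max_right _ _)
  have hsub : ∀ i, Ai i ⊆ intBox aA bA := by
    intro i; rw [hunion]; exact Set.subset_iUnion (fun i => intBox (a i) (b i)) i
  have huniq : ∀ (x : Rd d) (i j : Fin M), x ∈ Ai i → x ∈ Ai j → i = j := by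
    intro x i j hi hj
    by_contra h
    exact Set.disjoint_left.mp (hdisj i j h) hi hj
  have hAc : ((intBox aA bA)ᶜ : Set (Rd d)).Nonempty := by
    refine ⟨toRd bA, fun hx => ?_⟩
    simp only [intBox, Set.mem_setOf_eq] at hx
    exact lt_irrefl _ ((hx ⟨0, by omega⟩).2)
  have key : ∀ φi : (i : Fin M) →
      {φ : Zd d → Rn n // ∀ z : Zd d, infDist (toRd z) (Ai i)ᶜ ≤ irange d E0 → φ z = 0},
      mF τ E0 V ω F (intBox aA bA)
        ≤ ∑ i : Fin M, energy1 τ E0 V ω (fun z => F (toRd z) + (φi i).1 z) (Ai i) := by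
    intro φi
    set Φ : Zd d → Rn n := fun z =>
      if h : ∃ i, toRd z ∈ Ai i then (φi h.choose).1 z else 0 with hΦ
    have hΦ_eq : ∀ (z : Zd d) (i : Fin M), toRd z ∈ Ai i → Φ z = (φi i).1 z := by
      intro z i hz
      have h : ∃ j, toRd z ∈ Ai j := ⟨i, hz⟩
      have hch : h.choose = i := huniq _ _ _ h.choose_spec hz
      simp only [hΦ, dif_pos h]
      exact congrArg (fun j => (φi j).1 z) hch
    have hΦ_zero : ∀ z : Zd d, (¬ ∃ i, toRd z ∈ Ai i) → Φ z = 0 := by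
      intro z hz; simp only [hΦ, dif_neg hz]
    have hΦbc : ∀ z : Zd d, infDist (toRd z) (intBox aA bA)ᶜ ≤ irange d E0 → Φ z = 0 := by
      intro z hz
      by_cases h : ∃ i, toRd z ∈ Ai i
      · obtain ⟨i, hi⟩ := h
        rw [hΦ_eq z i hi]
        refine (φi i).2 z (le_trans ?_ hz)
        exact infDist_le_infDist_of_subset (Set.compl_subset_compl.mpr (hsub i)) hAc
      · exact hΦ_zero z h
    have hΦnb : ∀ (z : Zd d) (i : Fin M), toRd z ∈ Ai i → ∀ c ∈ E0,
        Φ (z + c) = (φi i).1 (z + c) := by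
      intro z i hi c hc
      by_cases h1 : toRd (z + c) ∈ Ai i
      · exact hΦ_eq _ _ h1
      · have hφi0 : (φi i).1 (z + c) = 0 :=
          (φi i).2 _ (by rw [infDist_zero_of_mem (Set.mem_compl h1)]; exact hR0)
        rw [hφi0]
        by_cases h2 : ∃ j, toRd (z + c) ∈ Ai j
        · obtain ⟨j, hj⟩ := h2
          rw [hΦ_eq _ _ hj]
          refine (φi j).2 _ (le_trans (infDist_le_dist_of_mem (y := toRd z) (Set.mem_compl ?_)) ?_)
          · intro hzj
            have hij : i = j := huniq _ _ _ hi hzj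
            rw [← hij] at hj
            exact h1 hj
          · rw [dist_toRd_add]
            exact hRb c hc
        · exact hΦ_zero _ h2
    set g : Fin M → Zd d → ℝ := fun i z =>
      if toRd z ∈ Ai i then
        ∑ c ∈ E0, V c (τ z ω)
          ((‖toRd c‖)⁻¹ • ((F (toRd (z + c)) + (φi i).1 (z + c)) - (F (toRd z) + (φi i).1 z)))
      else 0 with hg
    have hg_nonneg : ∀ i z, 0 ≤ g i z := by
      intro i z
      simp only [hg]
      split
      · exact Finset.sum_nonneg fun c hc => hVnn c hc _ _
      · exact le_rfl
    have hpt : ∀ z : Zd d,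
        (if toRd z ∈ intBox aA bA then
          ∑ c ∈ E0, V c (τ z ω)
            ((‖toRd c‖)⁻¹ • ((F (toRd (z + c)) + Φ (z + c)) - (F (toRd z) + Φ z)))
        else 0) = ∑ i : Fin M, g i z := by
      intro z
      by_cases hz : toRd z ∈ intBox aA bA
      · rw [if_pos hz]
        obtain ⟨i, hi⟩ : ∃ i, toRd z ∈ Ai i := by
          rw [hunion] at hz; exact Set.mem_iUnion.mp hz
        rw [Finset.sum_eq_single i]
        · simp only [hg]
          rw [if_pos hi]
          refine Finset.sum_congr rfl fun c hc => ?_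
          rw [hΦ_eq z i hi, hΦnb z i hi c hc]
        · intro j _ hji
          simp only [hg]
          rw [if_neg]
          intro hzj
          exact hji (huniq _ _ _ hzj hi)
        · intro h; exact absurd (Finset.mem_univ i) h
      · rw [if_neg hz]
        symm
        refine Finset.sum_eq_zero fun i _ => ?_
        simp only [hg]
        rw [if_neg fun hzi => hz (hsub i hzi)]
    have hmem : mF τ E0 V ω F (intBox aA bA)
        ≤ energy1 τ E0 V ω (fun z => F (toRd z) + Φ z) (intBox aA bA) := by
      unfold mF
      have hb : BddBelow (Set.range fun φ : {φ : Zd d → Rn n //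
          ∀ z : Zd d, infDist (toRd z) (intBox aA bA)ᶜ ≤ irange d E0 → φ z = 0} =>
          energy1 τ E0 V ω (fun z => F (toRd z) + φ.1 z) (intBox aA bA)) := by
        refine ⟨0, fun x hx => ?_⟩
        obtain ⟨φ, rfl⟩ := hx
        exact energy1_nonneg τ E0 V hVnn ω _ _
      exact ciInf_le hb ⟨Φ, hΦbc⟩
    have hE : energy1 τ E0 V ω (fun z => F (toRd z) + Φ z) (intBox aA bA)
        = ∑' z : Zd d, ∑ i : Fin M, g i z := by
      unfold energy1
      exact tsum_congr hpt
    by_cases hsum : Summable fun z : Zd d => ∑ i : Fin M, g i z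
    · have hsi : ∀ i ∈ (Finset.univ : Finset (Fin M)), Summable (g i) := by
        intro i _
        refine Summable.of_nonneg_of_le (hg_nonneg i) (fun z => ?_) hsum
        exact Finset.single_le_sum (fun j _ => hg_nonneg j z) (Finset.mem_univ i)
      rw [hE, Summable.tsum_finsetSum hsi] at hmem
      refine le_trans hmem (le_of_eq (Finset.sum_congr rfl fun i _ => ?_))
      unfold energy1
      exact tsum_congr fun z => by simp only [hg]
    · rw [hE, tsum_eq_zero_of_not_summable hsum] at hmem
      exact le_trans hmem (Finset.sum_nonneg fun i _ => energy1_nonneg τ E0 V hVnn ω _ _)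
  rcases Nat.eq_zero_or_pos M with hM | hM
  · subst hM
    simpa using key (fun i => i.elim0)
  · refine le_of_forall_pos_le_add fun ε hε => ?_
    have hMpos : (0:ℝ) < M := by exact_mod_cast hM
    have hchoice : ∀ i : Fin M, ∃ φ : {φ : Zd d → Rn n //
        ∀ z : Zd d, infDist (toRd z) (Ai i)ᶜ ≤ irange d E0 → φ z = 0},
        energy1 τ E0 V ω (fun z => F (toRd z) + φ.1 z) (Ai i)
          < mF τ E0 V ω F (Ai i) + ε / M := by
      intro i
      haveI : Nonempty {φ : Zd d → Rn n //
          ∀ z : Zd d, infDist (toRd z) (Ai i)ᶜ ≤ irange d E0 → φ z = 0} :=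
        ⟨⟨fun _ => 0, fun _ _ => rfl⟩⟩
      have hlt : mF τ E0 V ω F (Ai i) < mF τ E0 V ω F (Ai i) + ε / M :=
        lt_add_of_pos_right _ (by positivity)
      unfold mF at hlt ⊢
      exact exists_lt_of_ciInf_lt hlt
    choose φi hφi using hchoice
    calc mF τ E0 V ω F (intBox aA bA)
        ≤ ∑ i : Fin M, energy1 τ E0 V ω (fun z => F (toRd z) + (φi i).1 z) (Ai i) := key φi
      _ ≤ ∑ i : Fin M, (mF τ E0 V ω F (Ai i) + ε / M) :=
          Finset.sum_le_sum fun i _ => (hφi i).le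
      _ = ∑ i : Fin M, mF τ E0 V ω F (Ai i) + ε := by
          rw [Finset.sum_add_distrib, Finset.sum_const, Finset.card_univ, Fintype.card_fin,
            nsmul_eq_mul]
          field_simp

end StochHom
end
end

section
/- Explicit homogenization of a layered quadratic medium, direction e₁ (Remark 3.5 of the paper): for every weight ω : ℤ → (0,∞), every integer k ≥ 1 and every ℓ ∈ ℝ, the infimum over all k-periodic functions φ : ℤ^d → ℝ of (1/k^d) Σ_{z∈ℤ^d∩[0,k)^d} Σ_{i=1}^d ω(z·e₁) |ℓ·δ_{i1} + φ(z+e_i) − φ(z)|² equals ℓ² · ((1/k) Σ_{x=0}^{k−1} ω(x)^{−1})^{−1}, i.e. the harmonic mean of the weights ω(0),…,ω(k−1) times ℓ². -/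
open MeasureTheory Filter Set
open scoped Topology

noncomputable section

namespace Layered

/-- The standard basis vectors `eᵢ` of `ℤ^d`. -/
def stdb {d : ℕ} (i : Fin d) : Fin d → ℤ := fun j => if j = i then 1 else 0

/-- A function `φ : ℤ^d → ℝ` is `k`-periodic if `φ(z + k z') = φ(z)` for all `z, z' ∈ ℤ^d`. -/
def kPeriodic {d : ℕ} (k : ℕ) (φ : (Fin d → ℤ) → ℝ) : Prop :=
  ∀ z z' : Fin d → ℤ, φ (z + k • z') = φ z

/-- The lattice point of `ℤ^d ∩ [0,k)^d` corresponding to `w : Fin d → Fin k`. -/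
def pt {d k : ℕ} (w : Fin d → Fin k) : Fin d → ℤ := fun j => ((w j : ℕ) : ℤ)

section Aux

variable {d k : ℕ}

/-- Combine a first coordinate `x` with the remaining coordinates `r`. -/
def cmb [NeZero d] (x : Fin k) (r : {j : Fin d // j ≠ 0} → Fin k) : Fin d → Fin k :=
  fun j => if h : j = 0 then x else r ⟨j, h⟩

lemma cmb_zero [NeZero d] (x : Fin k) (r : {j : Fin d // j ≠ 0} → Fin k) :
    cmb x r 0 = x := dif_pos rfl

lemma cmb_bij [NeZero d] :
    Function.Bijective (fun p : Fin k × ({j : Fin d // j ≠ 0} → Fin k) => cmb p.1 p.2) := by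
  rw [Function.bijective_iff_has_inverse]
  refine ⟨fun w => (w 0, fun j => w j.1), fun p => ?_, fun w => ?_⟩
  · obtain ⟨x, r⟩ := p
    simp only [Prod.mk.injEq]
    constructor
    · exact cmb_zero x r
    · funext j
      simp [cmb, j.2]
  · funext j
    by_cases h : j = 0
    · subst h; simp [cmb]
    · simp [cmb, h]

lemma sum_cmb [NeZero d] (F : (Fin d → Fin k) → ℝ) :
    ∑ w : Fin d → Fin k, F w
      = ∑ x : Fin k, ∑ r : {j : Fin d // j ≠ 0} → Fin k, F (cmb x r) := by
  calc ∑ w : Fin d → Fin k, F w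
      = ∑ p : Fin k × ({j : Fin d // j ≠ 0} → Fin k), F (cmb p.1 p.2) :=
        (Fintype.sum_bijective _ cmb_bij _ _ fun p => rfl).symm
    _ = ∑ x : Fin k, ∑ r : {j : Fin d // j ≠ 0} → Fin k, F (cmb x r) :=
        Fintype.sum_prod_type _

lemma card_rest [NeZero d] :
    Fintype.card ({j : Fin d // j ≠ 0} → Fin k) = k ^ (d - 1) := by
  rw [Fintype.card_fun, Fintype.card_fin]
  congr 1
  have : Fintype.card {j : Fin d // j ≠ 0} = Fintype.card (Fin d) - Fintype.card {j : Fin d // j = 0} :=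
    Fintype.card_subtype_compl _
  rw [this, Fintype.card_subtype_eq (0 : Fin d), Fintype.card_fin]

/-- The lattice point with first coordinate `m` and remaining coordinates `r`. -/
def ptr [NeZero d] (r : {j : Fin d // j ≠ 0} → Fin k) (m : ℕ) : Fin d → ℤ :=
  fun j => if h : j = 0 then (m : ℤ) else ((r ⟨j, h⟩ : ℕ) : ℤ)

lemma pt_cmb [NeZero d] (x : Fin k) (r : {j : Fin d // j ≠ 0} → Fin k) :
    pt (cmb x r) = ptr r x := by
  funext j
  by_cases h : j = 0 <;> simp [pt, cmb, ptr, h]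

lemma ptr_succ [NeZero d] (r : {j : Fin d // j ≠ 0} → Fin k) (m : ℕ) :
    ptr r m + stdb (0 : Fin d) = ptr r (m + 1) := by
  funext j
  by_cases h : j = 0 <;> simp [ptr, stdb, h]

lemma ptr_period [NeZero d] (r : {j : Fin d // j ≠ 0} → Fin k) :
    ptr r k = ptr r 0 + k • stdb (0 : Fin d) := by
  funext j
  by_cases h : j = 0 <;> simp [ptr, stdb, h]

end Aux

/-- explicit homogenization of a layered quadratic medium, direction `e₁`,
Remark 3.5 of the paper: the `k`-periodic cell problem with slope `ℓ` in direction `e₁`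
has value `ℓ²` times the harmonic mean of the weights `ω(0),…,ω(k−1)`. -/
theorem layered_cell_e1
    (d : ℕ) (hd : 2 ≤ d) [NeZero d] (ω : ℤ → ℝ) (hω : ∀ x, 0 < ω x)
    (k : ℕ) (hk : 1 ≤ k) (ℓ : ℝ) :
    (⨅ φ : {φ : (Fin d → ℤ) → ℝ // kPeriodic k φ},
        ((k : ℝ) ^ d)⁻¹ * ∑ w : Fin d → Fin k, ∑ i : Fin d,
          ω (pt w 0) *
            |(if i = 0 then ℓ else 0) + φ.1 (pt w + stdb i) - φ.1 (pt w)| ^ 2) =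
      ℓ ^ 2 * ((k : ℝ)⁻¹ * ∑ x ∈ Finset.range k, (ω (x : ℤ))⁻¹)⁻¹ := by

  classical
  have hkR : (0 : ℝ) < (k : ℝ) := by exact_mod_cast hk
  set S : ℝ := ∑ x ∈ Finset.range k, (ω (x : ℤ))⁻¹ with hS_def
  have hS : 0 < S := by
    apply Finset.sum_pos (fun x _ => inv_pos.2 (hω _))
    exact Finset.nonempty_range_iff.2 (by omega)
  have hd1 : (k : ℝ) ^ d = (k : ℝ) ^ (d - 1) * (k : ℝ) := by
    rw [← pow_succ]
    congr 1
    omega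
  set c : ℝ := ℓ ^ 2 * ((k : ℝ)⁻¹ * S)⁻¹ with hc_def
  -- the energy functional
  set E : {φ : (Fin d → ℤ) → ℝ // kPeriodic k φ} → ℝ := fun φ =>
    ((k : ℝ) ^ d)⁻¹ * ∑ w : Fin d → Fin k, ∑ i : Fin d,
      ω (pt w 0) *
        |(if i = 0 then ℓ else 0) + φ.1 (pt w + stdb i) - φ.1 (pt w)| ^ 2 with hE_def
  -- Lower bound
  have key : ∀ φ : {φ : (Fin d → ℤ) → ℝ // kPeriodic k φ}, c ≤ E φ := by
    rintro ⟨φ, hφ⟩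
    have h1 : ∀ w : Fin d → Fin k,
        ω (pt w 0) * (ℓ + φ (pt w + stdb 0) - φ (pt w)) ^ 2 ≤
          ∑ i : Fin d, ω (pt w 0) *
            |(if i = 0 then ℓ else 0) + φ (pt w + stdb i) - φ (pt w)| ^ 2 := by
      intro w
      have := Finset.single_le_sum
        (f := fun i : Fin d => ω (pt w 0) *
          |(if i = 0 then ℓ else 0) + φ (pt w + stdb i) - φ (pt w)| ^ 2)
        (fun i _ => mul_nonneg (hω _).le (by positivity)) (Finset.mem_univ (0 : Fin d))
      simpa [sq_abs] using this
    have h3 : ∀ r : {j : Fin d // j ≠ 0} → Fin k,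
        ((k : ℝ) * ℓ) ^ 2 / S ≤
          ∑ x : Fin k, ω ((x : ℕ) : ℤ) *
            (ℓ + φ (ptr r ((x : ℕ) + 1)) - φ (ptr r (x : ℕ))) ^ 2 := by
      intro r
      set f : ℕ → ℝ := fun m => φ (ptr r m) with hf
      have hfk : f k = f 0 := by
        show φ (ptr r k) = φ (ptr r 0)
        rw [ptr_period]
        exact hφ _ _
      have hsum : ∑ x ∈ Finset.range k, (ℓ + f (x + 1) - f x) = (k : ℝ) * ℓ := by
        have htel : ∑ x ∈ Finset.range k, (f (x + 1) - f x) = f k - f 0 :=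
          Finset.sum_range_sub f k
        have : ∑ x ∈ Finset.range k, (ℓ + f (x + 1) - f x)
            = ∑ x ∈ Finset.range k, (ℓ + (f (x + 1) - f x)) := by
          refine Finset.sum_congr rfl fun x _ => by ring
        rw [this, Finset.sum_add_distrib, Finset.sum_const, Finset.card_range, htel, hfk,
          nsmul_eq_mul]
        ring
      have hCS := Finset.sq_sum_div_le_sum_sq_div (Finset.range k)
        (fun x => ℓ + f (x + 1) - f x) (g := fun x => (ω (x : ℤ))⁻¹)
        (fun i _ => inv_pos.2 (hω _))
      rw [hsum, ← hS_def] at hCS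
      calc ((k : ℝ) * ℓ) ^ 2 / S ≤
            ∑ x ∈ Finset.range k, (ℓ + f (x + 1) - f x) ^ 2 / (ω (x : ℤ))⁻¹ := hCS
        _ = ∑ x ∈ Finset.range k, ω (x : ℤ) * (ℓ + f (x + 1) - f x) ^ 2 := by
            refine Finset.sum_congr rfl fun x _ => ?_
            rw [div_eq_mul_inv, inv_inv, mul_comm]
        _ = ∑ x : Fin k, ω ((x : ℕ) : ℤ) *
              (ℓ + φ (ptr r ((x : ℕ) + 1)) - φ (ptr r (x : ℕ))) ^ 2 :=
            (Fin.sum_univ_eq_sum_range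
              (fun m => ω (m : ℤ) * (ℓ + f (m + 1) - f m) ^ 2) k).symm
    have h2 : ∑ w : Fin d → Fin k,
        ω (pt w 0) * (ℓ + φ (pt w + stdb 0) - φ (pt w)) ^ 2
        = ∑ r : {j : Fin d // j ≠ 0} → Fin k, ∑ x : Fin k,
            ω ((x : ℕ) : ℤ) * (ℓ + φ (ptr r ((x : ℕ) + 1)) - φ (ptr r (x : ℕ))) ^ 2 := by
      rw [sum_cmb (F := fun w => ω (pt w 0) * (ℓ + φ (pt w + stdb 0) - φ (pt w)) ^ 2),
        Finset.sum_comm]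
      refine Finset.sum_congr rfl fun r _ => Finset.sum_congr rfl fun x _ => ?_
      rw [pt_cmb, ptr_succ]
      have hz : ptr r (x : ℕ) 0 = ((x : ℕ) : ℤ) := by simp [ptr]
      rw [hz]
    have hb : ((k : ℝ) ^ (d - 1)) * (((k : ℝ) * ℓ) ^ 2 / S) ≤
        ∑ w : Fin d → Fin k, ω (pt w 0) * (ℓ + φ (pt w + stdb 0) - φ (pt w)) ^ 2 := by
      rw [h2]
      calc ((k : ℝ) ^ (d - 1)) * (((k : ℝ) * ℓ) ^ 2 / S)
          = ∑ _r : {j : Fin d // j ≠ 0} → Fin k, ((k : ℝ) * ℓ) ^ 2 / S := by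
            rw [Finset.sum_const, Finset.card_univ, card_rest, nsmul_eq_mul]
            push_cast
            ring
        _ ≤ _ := Finset.sum_le_sum fun r _ => h3 r
    have hc_eq : c = ((k : ℝ) ^ d)⁻¹ * (((k : ℝ) ^ (d - 1)) * (((k : ℝ) * ℓ) ^ 2 / S)) := by
      rw [hc_def, hd1]
      field_simp
    calc c = ((k : ℝ) ^ d)⁻¹ * (((k : ℝ) ^ (d - 1)) * (((k : ℝ) * ℓ) ^ 2 / S)) := hc_eq
      _ ≤ ((k : ℝ) ^ d)⁻¹ * ∑ w : Fin d → Fin k,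
            ω (pt w 0) * (ℓ + φ (pt w + stdb 0) - φ (pt w)) ^ 2 := by
          apply mul_le_mul_of_nonneg_left hb (by positivity)
      _ ≤ E ⟨φ, hφ⟩ := by
          apply mul_le_mul_of_nonneg_left _ (by positivity)
          exact Finset.sum_le_sum fun w _ => h1 w
  -- Upper bound: explicit minimizer
  set A : ℝ := (k : ℝ) * ℓ / S with hA_def
  set g : ℕ → ℝ := fun m => ∑ x ∈ Finset.range m, (-ℓ + A * (ω (x : ℤ))⁻¹) with hg_def
  have hgk : g k = 0 := by
    rw [hg_def]
    simp only [Finset.sum_add_distrib, Finset.sum_const, Finset.card_range, ← Finset.mul_sum,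
      nsmul_eq_mul]
    rw [← hS_def, hA_def]
    field_simp
    ring
  set ψ : ℤ → ℝ := fun n => g (n % k).toNat with hψ_def
  set Φ : (Fin d → ℤ) → ℝ := fun z => ψ (z 0) with hΦ_def
  have hper : kPeriodic k Φ := by
    intro z z'
    simp only [hΦ_def]
    have h0 : (z + k • z') 0 = z 0 + (z' 0) * (k : ℤ) := by
      simp [nsmul_eq_mul]
      ring
    rw [hψ_def]
    simp only [h0, Int.add_mul_emod_self_right]
  have hψstep : ∀ m : ℕ, m < k → ψ ((m : ℤ) + 1) - ψ (m : ℤ) = -ℓ + A * (ω (m : ℤ))⁻¹ := by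
    intro m hm
    have h1 : ψ (m : ℤ) = g m := by
      simp only [hψ_def]
      congr 1
      rw [Int.emod_eq_of_lt (by positivity) (by exact_mod_cast hm)]
      exact Int.toNat_natCast m
    have h2 : ψ ((m : ℤ) + 1) = g (m + 1) := by
      simp only [hψ_def]
      rcases Nat.lt_or_ge (m + 1) k with h | hge
      · congr 1
        have hc1 : ((m : ℤ) + 1) = ((m + 1 : ℕ) : ℤ) := by push_cast; ring
        rw [hc1, Int.emod_eq_of_lt (by positivity) (by exact_mod_cast h)]
        exact Int.toNat_natCast _
      · have h : m + 1 = k := le_antisymm (Nat.succ_le_of_lt hm) hge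
        have hmod : ((m : ℤ) + 1) % k = 0 := by
          have hc1 : ((m : ℤ) + 1) = (k : ℤ) := by exact_mod_cast congrArg (Nat.cast : ℕ → ℤ) h
          rw [hc1, Int.emod_self]
        rw [hmod, h, hgk]
        simp [hg_def]
    rw [h1, h2]
    simp only [hg_def]
    rw [Finset.sum_range_succ]
    ring
  -- energy of the minimizer
  have hinner : ∀ w : Fin d → Fin k,
      (∑ i : Fin d, ω (pt w 0) *
        |(if i = 0 then ℓ else 0) + Φ (pt w + stdb i) - Φ (pt w)| ^ 2)
      = A ^ 2 * (ω (pt w 0))⁻¹ := by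
    intro w
    rw [Finset.sum_eq_single_of_mem (0 : Fin d) (Finset.mem_univ _) ?_]
    · have hlt : (w 0 : ℕ) < k := (w 0).2
      have h00 : (pt w + stdb (0 : Fin d)) 0 = pt w 0 + 1 := by
        simp [pt, stdb]
      have hstep : Φ (pt w + stdb 0) - Φ (pt w) = -ℓ + A * (ω (pt w 0))⁻¹ := by
        simp only [hΦ_def]
        rw [h00]
        exact hψstep _ hlt
      rw [if_pos rfl, add_sub_assoc, hstep]
      have harg : ℓ + (-ℓ + A * (ω (pt w 0))⁻¹) = A * (ω (pt w 0))⁻¹ := by ring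
      rw [harg, sq_abs]
      have hω0 := (hω (pt w 0)).ne'
      field_simp
    · intro i _ hi
      have h0 : (pt w + stdb i) 0 = pt w 0 := by
        simp [pt, stdb, Ne.symm hi]
      rw [if_neg hi]
      simp only [hΦ_def]
      rw [h0]
      simp
  have hEmin : E ⟨Φ, hper⟩ = c := by
    simp only [hE_def]
    have hsw : ∑ w : Fin d → Fin k, (∑ i : Fin d,
        ω (pt w 0) * |(if i = 0 then ℓ else 0) + Φ (pt w + stdb i) - Φ (pt w)| ^ 2)
        = (k : ℝ) ^ (d - 1) * (A ^ 2 * S) := by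
      calc ∑ w : Fin d → Fin k, (∑ i : Fin d,
            ω (pt w 0) * |(if i = 0 then ℓ else 0) + Φ (pt w + stdb i) - Φ (pt w)| ^ 2)
          = ∑ w : Fin d → Fin k, A ^ 2 * (ω (pt w 0))⁻¹ :=
            Finset.sum_congr rfl fun w _ => hinner w
        _ = ∑ x : Fin k, ∑ _r : {j : Fin d // j ≠ 0} → Fin k, A ^ 2 * (ω (((x : ℕ) : ℤ)))⁻¹ := by
            rw [sum_cmb (F := fun w => A ^ 2 * (ω (pt w 0))⁻¹)]
            refine Finset.sum_congr rfl fun x _ => Finset.sum_congr rfl fun r _ => ?_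
            rw [pt_cmb]
            have hz : ptr r (x : ℕ) 0 = ((x : ℕ) : ℤ) := by simp [ptr]
            rw [hz]
        _ = (k : ℝ) ^ (d - 1) * (A ^ 2 * S) := by
            simp only [Finset.sum_const, Finset.card_univ, card_rest, nsmul_eq_mul]
            rw [hS_def, ← Fin.sum_univ_eq_sum_range (fun m => (ω (m : ℤ))⁻¹) k,
              Finset.mul_sum, Finset.mul_sum]
            push_cast
            exact Finset.sum_congr rfl fun x _ => by ring
    rw [hsw, hc_def, hA_def, hd1]
    field_simp
  -- conclude
  have hne : Nonempty {φ : (Fin d → ℤ) → ℝ // kPeriodic k φ} := ⟨⟨Φ, hper⟩⟩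
  have hbdd : BddBelow (Set.range E) := by
    refine ⟨c, ?_⟩
    rintro x ⟨φ, rfl⟩
    exact key φ
  refine le_antisymm ?_ (le_ciInf key)
  calc ⨅ φ, E φ ≤ E ⟨Φ, hper⟩ := ciInf_le hbdd _
    _ = c := hEmin

end Layered
end
end

section
/- Explicit homogenization of a layered quadratic medium, transverse directions (Remark 3.5 of the paper): for every weight ω : ℤ → (0,∞), every integer k ≥ 1, every ℓ ∈ ℝ and every j ∈ {2,…,d}, the infimum over all k-periodic functions φ : ℤ^d → ℝ of (1/k^d) Σ_{z∈ℤ^d∩[0,k)^d} Σ_{i=1}^d ω(z·e₁) |ℓ·δ_{ij} + φ(z+e_i) − φ(z)|² equals ℓ² · (1/k) Σ_{x=0}^{k−1} ω(x), i.e. the arithmetic mean of the weights ω(0),…,ω(k−1) times ℓ² (and the infimum is attained at φ = 0). -/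
open MeasureTheory Filter Set
open scoped Topology

noncomputable section

namespace Layered

lemma sum_eval_aux {k : ℕ} {ι : Type*} [Fintype ι] [DecidableEq ι] (i : ι) (f : Fin k → ℝ) :
    ∑ w : ι → Fin k, f (w i) = (k : ℝ) ^ (Fintype.card ι - 1) * ∑ x : Fin k, f x := by
  rw [← (Equiv.funSplitAt i (Fin k)).symm.sum_comp (fun w => f (w i))]
  simp [Fintype.sum_prod_type, Finset.sum_const, Fintype.card_fun, mul_comm,
    Fintype.card_subtype_compl, Finset.sum_mul]

lemma line_bound {k : ℕ} (hk : 1 ≤ k) (ℓ : ℝ) (ψ : ℕ → ℝ) (hψ : ψ k = ψ 0) :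
    (k : ℝ) * ℓ ^ 2 ≤ ∑ m ∈ Finset.range k, |ℓ + ψ (m + 1) - ψ m| ^ 2 := by
  have h1 : ∑ m ∈ Finset.range k, (ℓ + ψ (m + 1) - ψ m) = k * ℓ := by
    have ht := Finset.sum_range_sub ψ k
    have : ∑ m ∈ Finset.range k, (ℓ + ψ (m + 1) - ψ m)
        = ∑ m ∈ Finset.range k, (ℓ + (ψ (m + 1) - ψ m)) :=
      Finset.sum_congr rfl fun m _ => by ring
    rw [this, Finset.sum_add_distrib, ht, hψ, Finset.sum_const, Finset.card_range]
    simp [mul_comm]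
  have h2 := sq_sum_le_card_mul_sum_sq (s := Finset.range k)
    (f := fun m => ℓ + ψ (m + 1) - ψ m)
  rw [h1, Finset.card_range] at h2
  have hkpos : (0 : ℝ) < k := by exact_mod_cast hk
  have h3 : (k : ℝ) * ((k:ℝ) * ℓ ^ 2) ≤ (k:ℝ) * ∑ m ∈ Finset.range k, (ℓ + ψ (m+1) - ψ m) ^ 2 := by
    calc (k:ℝ) * ((k:ℝ) * ℓ ^ 2) = ((k:ℝ) * ℓ) ^ 2 := by ring
    _ ≤ _ := h2
  simpa [sq_abs] using le_of_mul_le_mul_left h3 hkpos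

lemma energy_lb (d : ℕ) (hd : 2 ≤ d) [NeZero d] (ω : ℤ → ℝ) (hω : ∀ x, 0 < ω x)
    (k : ℕ) (hk : 1 ≤ k) (ℓ : ℝ) (j : Fin d) (hj : j ≠ 0)
    (φ : (Fin d → ℤ) → ℝ) (hφ : kPeriodic k φ) :
    ℓ ^ 2 * ((k : ℝ)⁻¹ * ∑ x ∈ Finset.range k, ω (x : ℤ)) ≤
      ((k : ℝ) ^ d)⁻¹ * ∑ w : Fin d → Fin k, ∑ i : Fin d,
        ω (pt w 0) * |(if i = j then ℓ else 0) + φ (pt w + stdb i) - φ (pt w)| ^ 2 := by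
  have hkpos : (0 : ℝ) < k := by exact_mod_cast hk
  set F : (Fin d → Fin k) → ℝ :=
    fun w => ω (pt w 0) * |ℓ + φ (pt w + stdb j) - φ (pt w)| ^ 2 with hF
  -- Step 1: drop all directions but j
  have step1 : ∑ w : Fin d → Fin k, F w ≤ ∑ w : Fin d → Fin k, ∑ i : Fin d,
      ω (pt w 0) * |(if i = j then ℓ else 0) + φ (pt w + stdb i) - φ (pt w)| ^ 2 := by
    refine Finset.sum_le_sum fun w _ => ?_
    have h := Finset.single_le_sum (f := fun i : Fin d =>
        ω (pt w 0) * |(if i = j then ℓ else 0) + φ (pt w + stdb i) - φ (pt w)| ^ 2)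
      (fun i _ => mul_nonneg (hω _).le (by positivity)) (Finset.mem_univ j)
    have h0 : F w = ω (pt w 0) * |(if j = j then ℓ else 0) + φ (pt w + stdb j) - φ (pt w)| ^ 2 := by
      simp [hF]
    rw [h0]
    exact h
  -- Step 2: reindex and bound each line
  set e := Equiv.funSplitAt j (Fin k) with he
  have step2 : (k : ℝ) ^ (d - 2) * (∑ x : Fin k, ω ((x : ℕ) : ℤ)) * ((k : ℝ) * ℓ ^ 2)
      ≤ ∑ w : Fin d → Fin k, F w := by
    rw [← e.symm.sum_comp F, Fintype.sum_prod_type_right]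
    have hline : ∀ g : {i : Fin d // i ≠ j} → Fin k,
        ω ((g ⟨0, Ne.symm hj⟩ : ℕ) : ℤ) * ((k : ℝ) * ℓ ^ 2)
          ≤ ∑ m : Fin k, F (e.symm (m, g)) := by
      intro g
      set b : Fin d → ℤ := fun i => if h : i = j then 0 else ((g ⟨i, h⟩ : ℕ) : ℤ) with hb
      set ψ : ℕ → ℝ := fun n => φ (b + (n : ℤ) • stdb j) with hψdef
      have hpt : ∀ m : Fin k, pt (e.symm (m, g)) = b + ((m : ℕ) : ℤ) • stdb j := by
        intro m
        funext i
        by_cases h : i = j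
        · subst h
          simp [pt, he, b, stdb, Pi.smul_apply]
        · simp [pt, he, b, stdb, h, Pi.smul_apply]
      have hpt0 : ∀ m : Fin k, pt (e.symm (m, g)) 0 = ((g ⟨0, Ne.symm hj⟩ : ℕ) : ℤ) := by
        intro m
        rw [hpt m]
        simp [b, stdb, Ne.symm hj, Pi.smul_apply]
      have hFm : ∀ m : Fin k, F (e.symm (m, g))
          = ω ((g ⟨0, Ne.symm hj⟩ : ℕ) : ℤ) * |ℓ + ψ ((m : ℕ) + 1) - ψ (m : ℕ)| ^ 2 := by
        intro m
        show ω (pt (e.symm (m, g)) 0) *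
            |ℓ + φ (pt (e.symm (m, g)) + stdb j) - φ (pt (e.symm (m, g)))| ^ 2 = _
        rw [hpt0 m, hpt m]
        have h2 : b + ((m : ℕ) : ℤ) • stdb j + stdb j
            = b + ((((m : ℕ) + 1 : ℕ)) : ℤ) • stdb j := by
          push_cast
          rw [add_smul, one_smul, add_assoc]
        rw [h2]
      have hper : ψ k = ψ 0 := by
        show φ (b + ((k : ℕ) : ℤ) • stdb j) = φ (b + ((0 : ℕ) : ℤ) • stdb j)
        rw [natCast_zsmul]
        simpa using hφ b (stdb j)
      calc ω ((g ⟨0, Ne.symm hj⟩ : ℕ) : ℤ) * ((k : ℝ) * ℓ ^ 2)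
          ≤ ω ((g ⟨0, Ne.symm hj⟩ : ℕ) : ℤ)
            * ∑ m ∈ Finset.range k, |ℓ + ψ (m + 1) - ψ m| ^ 2 := by
            exact mul_le_mul_of_nonneg_left (line_bound hk ℓ ψ hper) (hω _).le
        _ = ∑ m : Fin k, F (e.symm (m, g)) := by
            rw [Finset.mul_sum, ← Fin.sum_univ_eq_sum_range
              (fun m => ω ((g ⟨0, Ne.symm hj⟩ : ℕ) : ℤ) * |ℓ + ψ (m + 1) - ψ m| ^ 2) k]
            exact Finset.sum_congr rfl fun m _ => (hFm m).symm
    calc (k : ℝ) ^ (d - 2) * (∑ x : Fin k, ω ((x : ℕ) : ℤ)) * ((k : ℝ) * ℓ ^ 2)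
        = ∑ g : {i : Fin d // i ≠ j} → Fin k,
            ω ((g ⟨0, Ne.symm hj⟩ : ℕ) : ℤ) * ((k : ℝ) * ℓ ^ 2) := by
          rw [← Finset.sum_mul, sum_eval_aux (⟨0, Ne.symm hj⟩ : {i : Fin d // i ≠ j})
            (fun x : Fin k => ω ((x : ℕ) : ℤ))]
          have hcard : Fintype.card {i : Fin d // i ≠ j} = d - 1 := by
            simp [Fintype.card_subtype_compl]
          rw [hcard]
          have : d - 1 - 1 = d - 2 := by omega
          rw [this]
      _ ≤ _ := Finset.sum_le_sum fun g _ => hline g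
  -- combine
  have hS : (∑ x : Fin k, ω ((x : ℕ) : ℤ)) = ∑ x ∈ Finset.range k, ω (x : ℤ) :=
    Fin.sum_univ_eq_sum_range (fun n => ω (n : ℤ)) k
  have hmain := le_trans step2 step1
  have hpow : (k : ℝ) ^ d = (k : ℝ) ^ (d - 2) * (k : ℝ) * (k : ℝ) := by
    rw [← pow_succ, ← pow_succ]
    congr 1
    omega
  have hfin : ℓ ^ 2 * ((k : ℝ)⁻¹ * ∑ x ∈ Finset.range k, ω (x : ℤ))
      = ((k : ℝ) ^ d)⁻¹ *
        ((k : ℝ) ^ (d - 2) * (∑ x : Fin k, ω ((x : ℕ) : ℤ)) * ((k : ℝ) * ℓ ^ 2)) := by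
    rw [hS, hpow]
    have hk0 : (k : ℝ) ≠ 0 := hkpos.ne'
    have hk2 : ((k:ℝ) ^ (d-2)) ≠ 0 := by positivity
    field_simp
  calc ℓ ^ 2 * ((k : ℝ)⁻¹ * ∑ x ∈ Finset.range k, ω (x : ℤ)) ≤ _ := hfin.le
    _ ≤ _ := by
        apply mul_le_mul_of_nonneg_left hmain
        positivity

lemma energy_zero (d : ℕ) (hd : 2 ≤ d) [NeZero d] (ω : ℤ → ℝ)
    (k : ℕ) (hk : 1 ≤ k) (ℓ : ℝ) (j : Fin d) :
    ((k : ℝ) ^ d)⁻¹ * ∑ w : Fin d → Fin k, ∑ i : Fin d,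
        ω (pt w 0) * |(if i = j then ℓ else 0) + (0 : ℝ) - 0| ^ 2 =
      ℓ ^ 2 * ((k : ℝ)⁻¹ * ∑ x ∈ Finset.range k, ω (x : ℤ)) := by
  have hkpos : (0 : ℝ) < k := by exact_mod_cast hk
  have hin : ∀ w : Fin d → Fin k, ∑ i : Fin d,
      ω (pt w 0) * |(if i = j then ℓ else 0) + (0 : ℝ) - 0| ^ 2 = ω (pt w 0) * ℓ ^ 2 := by
    intro w
    have hterm : ∀ i : Fin d, ω (pt w 0) * |(if i = j then ℓ else 0) + (0 : ℝ) - 0| ^ 2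
        = if i = j then ω (pt w 0) * ℓ ^ 2 else 0 := by
      intro i
      split <;> simp [sq_abs]
    rw [Finset.sum_congr rfl (fun i _ => hterm i), Finset.sum_ite_eq' Finset.univ j,
      if_pos (Finset.mem_univ j)]
  rw [Finset.sum_congr rfl (fun w _ => hin w), ← Finset.sum_mul]
  have hsum : ∑ w : Fin d → Fin k, ω (pt w 0)
      = (k : ℝ) ^ (d - 1) * ∑ x : Fin k, ω ((x : ℕ) : ℤ) := by
    have := sum_eval_aux (k := k) (ι := Fin d) 0 (fun x : Fin k => ω ((x : ℕ) : ℤ))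
    simpa [Fintype.card_fin, pt] using this
  rw [hsum, Fin.sum_univ_eq_sum_range (fun n => ω (n : ℤ)) k]
  have hpow : (k : ℝ) ^ d = (k : ℝ) ^ (d - 1) * (k : ℝ) := by
    rw [← pow_succ]; congr 1; omega
  rw [hpow]
  have hk0 : (k : ℝ) ≠ 0 := hkpos.ne'
  have hk1 : ((k : ℝ) ^ (d - 1)) ≠ 0 := by positivity
  field_simp

/-- explicit homogenization of a layered quadratic medium, transverse
directions, Remark 3.5 of the paper: for `j ≠ e₁` the `k`-periodic cell problem with slope `ℓ`
in direction `e_j` has value `ℓ²` times the arithmetic mean of the weights `ω(0),…,ω(k−1)`,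
and the infimum is attained at `φ = 0`. -/
theorem layered_cell_transverse
    (d : ℕ) (hd : 2 ≤ d) [NeZero d] (ω : ℤ → ℝ) (hω : ∀ x, 0 < ω x)
    (k : ℕ) (hk : 1 ≤ k) (ℓ : ℝ) (j : Fin d) (hj : j ≠ 0) :
    (⨅ φ : {φ : (Fin d → ℤ) → ℝ // kPeriodic k φ},
        ((k : ℝ) ^ d)⁻¹ * ∑ w : Fin d → Fin k, ∑ i : Fin d,
          ω (pt w 0) *
            |(if i = j then ℓ else 0) + φ.1 (pt w + stdb i) - φ.1 (pt w)| ^ 2) =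
      ℓ ^ 2 * ((k : ℝ)⁻¹ * ∑ x ∈ Finset.range k, ω (x : ℤ)) ∧
    ((k : ℝ) ^ d)⁻¹ * ∑ w : Fin d → Fin k, ∑ i : Fin d,
        ω (pt w 0) * |(if i = j then ℓ else 0) + (0 : ℝ) - 0| ^ 2 =
      ℓ ^ 2 * ((k : ℝ)⁻¹ * ∑ x ∈ Finset.range k, ω (x : ℤ)) := by
  have h2 := energy_zero d hd ω k hk ℓ j
  haveI : Nonempty {φ : (Fin d → ℤ) → ℝ // kPeriodic k φ} :=
    ⟨⟨fun _ => 0, fun _ _ => rfl⟩⟩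
  refine ⟨le_antisymm ?_ (le_ciInf fun φ => energy_lb d hd ω hω k hk ℓ j hj φ.1 φ.2), h2⟩
  have h0 : kPeriodic k (fun _ : Fin d → ℤ => (0 : ℝ)) := fun _ _ => rfl
  have hbdd : BddBelow (Set.range (fun φ : {φ : (Fin d → ℤ) → ℝ // kPeriodic k φ} =>
      ((k : ℝ) ^ d)⁻¹ * ∑ w : Fin d → Fin k, ∑ i : Fin d,
        ω (pt w 0) *
          |(if i = j then ℓ else 0) + φ.1 (pt w + stdb i) - φ.1 (pt w)| ^ 2)) := by
    refine ⟨ℓ ^ 2 * ((k : ℝ)⁻¹ * ∑ x ∈ Finset.range k, ω (x : ℤ)), ?_⟩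
    rintro x ⟨φ, rfl⟩
    exact energy_lb d hd ω hω k hk ℓ j hj φ.1 φ.2
  exact (ciInf_le hbdd ⟨fun _ => 0, h0⟩).trans_eq h2

end Layered
end
end
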